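/- For every real C > 0 there exists n₀ such that the following holds for all n ≥ n₀. If G is a (p,α)-jumbled graph on n vertices with α ≤ C·√(pn) and pn ≥ (200C + 10)^{2/3}·n^{2/3}, then G contains the Petersen graph as a subgraph. -/

import Mathlib

/-- A graph `G` is `(p, α)`-jumbled if for all vertex subsets `X, Y` we have
`|e(X,Y) - p|X||Y|| ≤ α √(|X||Y|)`. -/
def IsJumbled {V : Type*} [Fintype V] [DecidableEq V] (G : SimpleGraph V) [DecidableRel G.Adj]
    (p α : ℝ) : Prop :=
  ∀ X Y : Finset V,
    |((SimpleGraph.interedges G X Y).card : ℝ) - p * X.card * Y.card| ≤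
      α * Real.sqrt ((X.card : ℝ) * Y.card)

/-- The Petersen graph: vertices are the 2-element subsets of a 5-element set,
adjacent iff disjoint. -/
def petersen : SimpleGraph {s : Finset (Fin 5) // s.card = 2} where
  Adj a b := Disjoint (a : Finset (Fin 5)) (b : Finset (Fin 5))
  symm := ⟨fun _ _ h => h.symm⟩
  loopless := ⟨by
    rintro ⟨a, ha⟩ h
    have : a = ∅ := disjoint_self.mp h
    simp [this] at ha⟩

/-- `G` contains a copy of `F`. -/
def ContainsCopy {W V : Type*} (F : SimpleGraph W) (G : SimpleGraph V) : Prop :=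
  ∃ f : W → V, Function.Injective f ∧ ∀ a b, F.Adj a b → G.Adj (f a) (f b)

open Finset

section Aux
variable {V : Type} [Fintype V] [DecidableEq V] (G : SimpleGraph V) [DecidableRel G.Adj] {p α : ℝ}

lemma card_interedges_sum (s t : Finset V) :
    #(G.interedges s t) = ∑ x ∈ s, #(G.neighborFinset x ∩ t) := by
  rw [SimpleGraph.interedges, Rel.interedges_eq_biUnion, card_biUnion]
  · refine Finset.sum_congr rfl fun x _ => ?_
    rw [card_map]
    congr 1
    ext y
    simp [SimpleGraph.mem_neighborFinset, and_comm]
  · intro a _ b _ hab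
    simp only [disjoint_left]
    intro ⟨u, v⟩ hu hv
    simp only [mem_map] at hu hv
    obtain ⟨y, _, hy⟩ := hu; obtain ⟨z, _, hz⟩ := hv
    exact hab (by cases hy; cases hz; rfl)

lemma jumb_lower (hj : IsJumbled G p α) (X Y : Finset V) :
    p * #X * #Y - α * Real.sqrt ((#X : ℝ) * #Y) ≤ (#(G.interedges X Y) : ℝ) := by
  have := hj X Y
  rw [abs_le] at this
  linarith [this.1]

lemma jumb_upper (hj : IsJumbled G p α) (X Y : Finset V) :
    (#(G.interedges X Y) : ℝ) ≤ p * #X * #Y + α * Real.sqrt ((#X : ℝ) * #Y) := by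
  have := hj X Y
  rw [abs_le] at this
  linarith [this.2]

lemma badset_aux {B T : Finset V} {t : ℝ} (ht : 0 < t) (hα : 0 ≤ α)
    (key : t * #B ≤ α * Real.sqrt ((#B : ℝ) * #T)) :
    (#B : ℝ) ≤ α ^ 2 * #T / t ^ 2 := by
  rcases eq_or_lt_of_le (Nat.cast_nonneg (α := ℝ) #B) with h0 | hBpos
  · rw [← h0]; positivity
  · have hsq : (t * #B) ^ 2 ≤ (α * Real.sqrt ((#B : ℝ) * #T)) ^ 2 := by
      have h1 : 0 ≤ t * (#B : ℝ) := by positivity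
      exact pow_le_pow_left₀ h1 key 2
    rw [mul_pow, mul_pow, Real.sq_sqrt (by positivity)] at hsq
    rw [le_div_iff₀ (by positivity : (0:ℝ) < t ^ 2)]
    have h2 : (#B : ℝ) * (t ^ 2 * #B) ≤ (#B : ℝ) * (α ^ 2 * #T) := by nlinarith
    have := le_of_mul_le_mul_left h2 hBpos
    linarith

lemma badset_low (hj : IsJumbled G p α) (hα : 0 ≤ α) {T B : Finset V} {t : ℝ} (ht : 0 < t)
    (hB : ∀ x ∈ B, ((#(G.neighborFinset x ∩ T)) : ℝ) < p * #T - t) :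
    (#B : ℝ) ≤ α ^ 2 * #T / t ^ 2 := by
  have he : (#(G.interedges B T) : ℝ) ≤ #B * (p * #T - t) := by
    rw [card_interedges_sum]
    push_cast
    calc (∑ x ∈ B, (#(G.neighborFinset x ∩ T) : ℝ))
        ≤ ∑ _x ∈ B, (p * #T - t) := Finset.sum_le_sum fun x hx => le_of_lt (hB x hx)
      _ = #B * (p * #T - t) := by rw [Finset.sum_const, nsmul_eq_mul]
  have hl := jumb_lower G hj B T
  refine badset_aux ht hα ?_
  nlinarith [hl, he]

lemma badset_high (hj : IsJumbled G p α) (hα : 0 ≤ α) {T B : Finset V} {t : ℝ} (ht : 0 < t)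
    (hB : ∀ x ∈ B, p * #T + t < ((#(G.neighborFinset x ∩ T)) : ℝ)) :
    (#B : ℝ) ≤ α ^ 2 * #T / t ^ 2 := by
  have he : (#B : ℝ) * (p * #T + t) ≤ (#(G.interedges B T) : ℝ) := by
    rw [card_interedges_sum]
    push_cast
    calc (#B : ℝ) * (p * #T + t) = ∑ _x ∈ B, (p * #T + t) := by
          rw [Finset.sum_const, nsmul_eq_mul]
      _ ≤ ∑ x ∈ B, (#(G.neighborFinset x ∩ T) : ℝ) :=
          Finset.sum_le_sum fun x hx => le_of_lt (hB x hx)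
  have hu := jumb_upper G hj B T
  refine badset_aux ht hα ?_
  nlinarith [hu, he]

end Aux
section MainAux
open Finset
variable {V : Type} [Fintype V] [DecidableEq V] (G : SimpleGraph V) [DecidableRel G.Adj] {p α : ℝ}

end MainAux

def pedges : List (ℕ × ℕ) :=
  [(0,1),(1,2),(2,3),(3,4),(0,4),(0,5),(1,6),(2,7),(3,8),(4,9),(5,7),(7,9),(6,9),(6,8),(5,8)]

def padj (i j : Fin 10) : Bool :=
  decide ((i.1, j.1) ∈ pedges) || decide ((j.1, i.1) ∈ pedges)

def eIdx : Finset (Fin 5) → Fin 10 := fun s =>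
  if 0 ∈ s then (if 1 ∈ s then 0 else if 2 ∈ s then 2 else if 3 ∈ s then 8 else 9)
  else if 1 ∈ s then (if 2 ∈ s then 6 else if 3 ∈ s then 7 else 3)
  else if 2 ∈ s then (if 3 ∈ s then 4 else 5)
  else 1

lemma hinjE : ∀ a b : {s : Finset (Fin 5) // s.card = 2}, eIdx a.1 = eIdx b.1 → a = b := by
  decide

lemma hadjE : ∀ a b : {s : Finset (Fin 5) // s.card = 2},
    Disjoint a.1 b.1 → padj (eIdx a.1) (eIdx b.1) = true := by
  decide

def lookFun {V : Type} (x0 x1 x2 x3 x4 x5 x6 x7 x8 x9 : V) : Fin 10 → V := fun i =>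
  if i.1 = 0 then x0 else if i.1 = 1 then x1 else if i.1 = 2 then x2 else if i.1 = 3 then x3
  else if i.1 = 4 then x4 else if i.1 = 5 then x5 else if i.1 = 6 then x6 else if i.1 = 7 then x7
  else if i.1 = 8 then x8 else x9

lemma lookInj {V : Type} {x0 x1 x2 x3 x4 x5 x6 x7 x8 x9 : V} (d01 : x0 ≠ x1) (d02 : x0 ≠ x2) (d03 : x0 ≠ x3) (d04 : x0 ≠ x4) (d05 : x0 ≠ x5) (d06 : x0 ≠ x6) (d07 : x0 ≠ x7) (d08 : x0 ≠ x8) (d09 : x0 ≠ x9) (d12 : x1 ≠ x2) (d13 : x1 ≠ x3) (d14 : x1 ≠ x4) (d15 : x1 ≠ x5) (d16 : x1 ≠ x6) (d17 : x1 ≠ x7) (d18 : x1 ≠ x8) (d19 : x1 ≠ x9) (d23 : x2 ≠ x3) (d24 : x2 ≠ x4) (d25 : x2 ≠ x5) (d26 : x2 ≠ x6) (d27 : x2 ≠ x7) (d28 : x2 ≠ x8) (d29 : x2 ≠ x9) (d34 : x3 ≠ x4) (d35 : x3 ≠ x5) (d36 : x3 ≠ x6) (d37 : x3 ≠ x7)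 (d38 : x3 ≠ x8) (d39 : x3 ≠ x9) (d45 : x4 ≠ x5) (d46 : x4 ≠ x6) (d47 : x4 ≠ x7) (d48 : x4 ≠ x8) (d49 : x4 ≠ x9) (d56 : x5 ≠ x6) (d57 : x5 ≠ x7) (d58 : x5 ≠ x8) (d59 : x5 ≠ x9) (d67 : x6 ≠ x7) (d68 : x6 ≠ x8) (d69 : x6 ≠ x9) (d78 : x7 ≠ x8) (d79 : x7 ≠ x9) (d89 : x8 ≠ x9) :
    ∀ i j : Fin 10, lookFun x0 x1 x2 x3 x4 x5 x6 x7 x8 x9 i = lookFun x0 x1 x2 x3 x4 x5 x6 x7 x8 x9 j → i = j := by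
  intro i j h
  fin_cases i <;> fin_cases j <;> simp only [lookFun] at h <;> norm_num at h ⊢
  · exact absurd h d01
  · exact absurd h d02
  · exact absurd h d03
  · exact absurd h d04
  · exact absurd h d05
  · exact absurd h d06
  · exact absurd h d07
  · exact absurd h d08
  · exact absurd h d09
  · exact absurd h.symm d01
  · exact absurd h d12
  · exact absurd h d13
  · exact absurd h d14
  · exact absurd h d15
  · exact absurd h d16
  · exact absurd h d17
  · exact absurd h d18
  · exact absurd h d19
  · exact absurd h.symm d02
  · exact absurd h.symm d12
  · exact absurd h d23
  · exact absurd h d24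
  · exact absurd h d25
  · exact absurd h d26
  · exact absurd h d27
  · exact absurd h d28
  · exact absurd h d29
  · exact absurd h.symm d03
  · exact absurd h.symm d13
  · exact absurd h.symm d23
  · exact absurd h d34
  · exact absurd h d35
  · exact absurd h d36
  · exact absurd h d37
  · exact absurd h d38
  · exact absurd h d39
  · exact absurd h.symm d04
  · exact absurd h.symm d14
  · exact absurd h.symm d24
  · exact absurd h.symm d34
  · exact absurd h d45
  · exact absurd h d46
  · exact absurd h d47
  · exact absurd h d48
  · exact absurd h d49
  · exact absurd h.symm d05
  · exact absurd h.symm d15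
  · exact absurd h.symm d25
  · exact absurd h.symm d35
  · exact absurd h.symm d45
  · exact absurd h d56
  · exact absurd h d57
  · exact absurd h d58
  · exact absurd h d59
  · exact absurd h.symm d06
  · exact absurd h.symm d16
  · exact absurd h.symm d26
  · exact absurd h.symm d36
  · exact absurd h.symm d46
  · exact absurd h.symm d56
  · exact absurd h d67
  · exact absurd h d68
  · exact absurd h d69
  · exact absurd h.symm d07
  · exact absurd h.symm d17
  · exact absurd h.symm d27
  · exact absurd h.symm d37
  · exact absurd h.symm d47
  · exact absurd h.symm d57
  · exact absurd h.symm d67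
  · exact absurd h d78
  · exact absurd h d79
  · exact absurd h.symm d08
  · exact absurd h.symm d18
  · exact absurd h.symm d28
  · exact absurd h.symm d38
  · exact absurd h.symm d48
  · exact absurd h.symm d58
  · exact absurd h.symm d68
  · exact absurd h.symm d78
  · exact absurd h d89
  · exact absurd h.symm d09
  · exact absurd h.symm d19
  · exact absurd h.symm d29
  · exact absurd h.symm d39
  · exact absurd h.symm d49
  · exact absurd h.symm d59
  · exact absurd h.symm d69
  · exact absurd h.symm d79
  · exact absurd h.symm d89

lemma lookAdj {V : Type} (G : SimpleGraph V) {x0 x1 x2 x3 x4 x5 x6 x7 x8 x9 : V} (a01 : G.Adj x0 x1) (a12 : G.Adj x1 x2) (a23 : G.Adj x2 x3) (a05 : G.Adj x0 x5) (a38 : G.Adj x3 x8) (a58 : G.Adj x5 x8) (a57 : G.Adj x5 x7) (a27 : G.Adj x2 x7) (a97 : G.Adj x9 x7) (a96 : G.Adj x9 x6) (a86 : G.Adj x8 x6) (a16 : G.Adj x1 x6) (a94 : G.Adj x9 x4) (a34 : G.Adj x3 x4) (a04 : G.Adj x0 x4) :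
    ∀ i j : Fin 10, padj i j = true → G.Adj (lookFun x0 x1 x2 x3 x4 x5 x6 x7 x8 x9 i) (lookFun x0 x1 x2 x3 x4 x5 x6 x7 x8 x9 j) := by
  intro i j h
  fin_cases i <;> fin_cases j <;> simp only [lookFun] <;> norm_num
  · exact absurd h (by decide)
  · exact a01
  · exact absurd h (by decide)
  · exact absurd h (by decide)
  · exact a04
  · exact a05
  · exact absurd h (by decide)
  · exact absurd h (by decide)
  · exact absurd h (by decide)
  · exact absurd h (by decide)
  · exact (a01).symm
  · exact absurd h (by decide)
  · exact a12
  · exact absurd h (by decide)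
  · exact absurd h (by decide)
  · exact absurd h (by decide)
  · exact a16
  · exact absurd h (by decide)
  · exact absurd h (by decide)
  · exact absurd h (by decide)
  · exact absurd h (by decide)
  · exact (a12).symm
  · exact absurd h (by decide)
  · exact a23
  · exact absurd h (by decide)
  · exact absurd h (by decide)
  · exact absurd h (by decide)
  · exact a27
  · exact absurd h (by decide)
  · exact absurd h (by decide)
  · exact absurd h (by decide)
  · exact absurd h (by decide)
  · exact (a23).symm
  · exact absurd h (by decide)
  · exact a34
  · exact absurd h (by decide)
  · exact absurd h (by decide)
  · exact absurd h (by decide)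
  · exact a38
  · exact absurd h (by decide)
  · exact (a04).symm
  · exact absurd h (by decide)
  · exact absurd h (by decide)
  · exact (a34).symm
  · exact absurd h (by decide)
  · exact absurd h (by decide)
  · exact absurd h (by decide)
  · exact absurd h (by decide)
  · exact absurd h (by decide)
  · exact (a94).symm
  · exact (a05).symm
  · exact absurd h (by decide)
  · exact absurd h (by decide)
  · exact absurd h (by decide)
  · exact absurd h (by decide)
  · exact absurd h (by decide)
  · exact absurd h (by decide)
  · exact a57
  · exact a58
  · exact absurd h (by decide)
  · exact absurd h (by decide)
  · exact (a16).symm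
  · exact absurd h (by decide)
  · exact absurd h (by decide)
  · exact absurd h (by decide)
  · exact absurd h (by decide)
  · exact absurd h (by decide)
  · exact absurd h (by decide)
  · exact (a86).symm
  · exact (a96).symm
  · exact absurd h (by decide)
  · exact absurd h (by decide)
  · exact (a27).symm
  · exact absurd h (by decide)
  · exact absurd h (by decide)
  · exact (a57).symm
  · exact absurd h (by decide)
  · exact absurd h (by decide)
  · exact absurd h (by decide)
  · exact (a97).symm
  · exact absurd h (by decide)
  · exact absurd h (by decide)
  · exact absurd h (by decide)
  · exact (a38).symm
  · exact absurd h (by decide)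
  · exact (a58).symm
  · exact a86
  · exact absurd h (by decide)
  · exact absurd h (by decide)
  · exact absurd h (by decide)
  · exact absurd h (by decide)
  · exact absurd h (by decide)
  · exact absurd h (by decide)
  · exact absurd h (by decide)
  · exact a94
  · exact absurd h (by decide)
  · exact a96
  · exact a97
  · exact absurd h (by decide)
  · exact absurd h (by decide)

set_option maxHeartbeats 2000000 in
theorem stmt_3 (C : ℝ) (hC : 0 < C) :
    ∃ n₀ : ℕ, ∀ (V : Type) [Fintype V] [DecidableEq V]
      (G : SimpleGraph V) [DecidableRel G.Adj] (p α : ℝ),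
      0 ≤ p → p ≤ 1 → 0 ≤ α → n₀ ≤ Fintype.card V →
      IsJumbled G p α →
      α ≤ C * Real.sqrt (p * Fintype.card V) →
      (200 * C + 10) ^ ((2 : ℝ) / 3) * (Fintype.card V : ℝ) ^ ((2 : ℝ) / 3) ≤ p * Fintype.card V →
      ContainsCopy petersen G := by
  classical
  refine ⟨1000000, ?_⟩
  intro V _ _ G _ p α hp0 hp1 hα0 hcard hj hαC hpn
  set n : ℝ := (Fintype.card V : ℝ) with hndef
  have hn6 : (1000000 : ℝ) ≤ n := by rw [hndef]; exact_mod_cast hcard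
  have hn0 : (0:ℝ) < n := by linarith
  have hK : (0:ℝ) < 200*C+10 := by linarith
  have hpn0 : 0 < p * n := by
    have h1 : (0:ℝ) < (200*C+10) ^ ((2:ℝ)/3) * n ^ ((2:ℝ)/3) := by positivity
    linarith
  have hp : 0 < p := by nlinarith [hpn0, hn0]
  have hcube : ∀ x : ℝ, 0 ≤ x → (x ^ ((2:ℝ)/3)) ^ (3:ℕ) = x ^ (2:ℕ) := by
    intro x hx
    rw [← Real.rpow_natCast (x ^ ((2:ℝ)/3)) 3, ← Real.rpow_mul hx]
    have h2 : ((2:ℝ)/3) * ((3:ℕ):ℝ) = ((2:ℕ):ℝ) := by norm_num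
    rw [h2, Real.rpow_natCast]
  have hQ : (200*C+10)^2 * n^2 ≤ (p*n)^3 := by
    have h3 := pow_le_pow_left₀ (by positivity) hpn 3
    rw [mul_pow, hcube _ (le_of_lt hK), hcube _ (le_of_lt hn0)] at h3
    exact h3
  have hQ1 : (200*C+10)^2 ≤ p^3*n := by
    have h : (200*C+10)^2 * n^2 ≤ (p^3*n) * n^2 := by nlinarith [hQ]
    exact le_of_mul_le_mul_right h (by positivity)
  have hCsq : 40000*C^2 + 100 ≤ p^3*n := by nlinarith [hQ1, hC]
  have hp3n : (100:ℝ) ≤ p^3*n := by nlinarith [hCsq, sq_nonneg C]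
  have hpnn : p*n ≤ n := by nlinarith [hp1, hn0]
  have hpnbig : (10000:ℝ) ≤ p*n := by
    have h1 : 100 * n^2 ≤ (p*n)^3 := by nlinarith [hQ, hC]
    have hc : 1000000*n ≤ n*n := by nlinarith [hn6, hn0]
    have hb : (100000000:ℝ) * (p*n) ≤ 100*(n*n) := by nlinarith [hpnn, hc]
    have h3 : (100000000:ℝ) * (p*n) ≤ ((p*n)*(p*n))*(p*n) := by
      have e1 : ((p*n)*(p*n))*(p*n) = (p*n)^3 := by ring
      have e2 : (100:ℝ)*n^2 = 100*(n*n) := by ring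
      rw [e1]; linarith [h1, hb, le_of_eq e2, ge_of_eq e2]
    have h4 : (100000000:ℝ) ≤ (p*n)*(p*n) := le_of_mul_le_mul_right h3 hpn0
    by_contra hcon
    push_neg at hcon
    have t1 := mul_lt_mul_of_pos_left hcon hpn0
    linarith [t1, hcon, h4, hpn0]
  have hα2 : α^2 ≤ C^2*(p*n) := by
    have h := pow_le_pow_left₀ hα0 hαC 2
    rw [mul_pow, Real.sq_sqrt (le_of_lt hpn0)] at h
    exact h
  have hα200 : α ≤ p^2*n/200 := by
    have h1 : α^2 ≤ (p^2*n/200)^2 := by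
      have k1 : (40000*C^2)*(p*n) ≤ (p^3*n)*(p*n) :=
        mul_le_mul_of_nonneg_right (by linarith) (le_of_lt hpn0)
      have e3 : (p^2*n/200)^2 = (p^3*n)*(p*n)/40000 := by ring
      have e4 : (40000*C^2)*(p*n) = 40000*(C^2*(p*n)) := by ring
      linarith [hα2, k1, le_of_eq e3, ge_of_eq e3, le_of_eq e4, ge_of_eq e4]
    by_contra hcon
    push_neg at hcon
    have hb : (0:ℝ) < p^2*n/200 := by positivity
    have hαpos : 0 < α := lt_trans hb hcon
    have t1 := mul_lt_mul_of_pos_left hcon hb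
    have t2 := mul_lt_mul_of_pos_right hcon hαpos
    have e1 : α^2 = α*α := by ring
    have e2 : (p^2*n/200)^2 = (p^2*n/200)*(p^2*n/200) := by ring
    linarith [h1, t1, t2, le_of_eq e1, ge_of_eq e1, le_of_eq e2, ge_of_eq e2]
  have hsm1 : (p*n/1250)*(3*p*n/2) ≤ (p*n/25)^2 := by nlinarith [sq_nonneg (p*n)]
  have hsm2 : (3*p*n/2)*(p*n/1250) ≤ (p*n/25)^2 := by nlinarith [sq_nonneg (p*n)]
  -- auxiliary small facts
  have hp2le : p^2*n ≤ n := by nlinarith [hp1, hp, hn0]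
  have hpn2le : p^2*n ≤ p*n := by nlinarith [hp1, hp, hpn0]
  have hcardU : ∀ A B : Finset V, (((A ∪ B).card : ℕ) : ℝ) ≤ (A.card : ℝ) + (B.card : ℝ) := by
    intro A B
    exact_mod_cast Finset.card_union_le A B
  have hpick : ∀ S U : Finset V, ((U.card : ℕ) : ℝ) < ((S.card : ℕ) : ℝ) → ∃ x, x ∈ S ∧ x ∉ U := by
    intro S U h
    have h' : U.card < S.card := by exact_mod_cast h
    have h2 : 0 < (S \ U).card := lt_of_lt_of_le (by omega) (Finset.le_card_sdiff U S)
    obtain ⟨x, hx⟩ := Finset.card_pos.mp h2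
    rw [Finset.mem_sdiff] at hx
    exact ⟨x, hx.1, hx.2⟩
  set Bad : Finset V → Finset V := fun T => Finset.univ.filter
      (fun x => ((G.neighborFinset x ∩ T).card : ℝ) < p * T.card / 2 ∨
        3 * p * T.card / 2 < ((G.neighborFinset x ∩ T).card : ℝ)) with hBadDef
  have hGood : ∀ (T : Finset V) (x : V), x ∉ Bad T →
      p * T.card / 2 ≤ ((G.neighborFinset x ∩ T).card : ℝ) ∧
      ((G.neighborFinset x ∩ T).card : ℝ) ≤ 3 * p * T.card / 2 := by
    intro T x hx
    rw [hBadDef] at hx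
    simp only [Finset.mem_filter, Finset.mem_univ, true_and, not_or, not_lt] at hx
    exact hx
  have hBadCard : ∀ T : Finset V, 0 < (T.card : ℝ) → ((Bad T).card : ℝ) ≤ 8*α^2/(p^2*T.card) := by
    intro T hT
    have ht : 0 < p * T.card / 2 := by positivity
    have hsub : Bad T ⊆ (Finset.univ.filter (fun x => ((G.neighborFinset x ∩ T).card : ℝ) < p * T.card / 2)) ∪
        (Finset.univ.filter (fun x => 3 * p * T.card / 2 < ((G.neighborFinset x ∩ T).card : ℝ))) := by
      rw [hBadDef]
      intro x hx
      simp only [Finset.mem_filter, Finset.mem_univ, true_and, Finset.mem_union] at hx ⊢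
      tauto
    have h1 : ((Finset.univ.filter (fun x => ((G.neighborFinset x ∩ T).card : ℝ) < p * T.card / 2)).card : ℝ)
        ≤ α^2 * T.card / (p * T.card/2)^2 := by
      refine badset_low G hj hα0 ht ?_
      intro x hx
      have := (Finset.mem_filter.mp hx).2
      linarith
    have h2 : ((Finset.univ.filter (fun x => 3 * p * T.card / 2 < ((G.neighborFinset x ∩ T).card : ℝ))).card : ℝ)
        ≤ α^2 * T.card / (p * T.card/2)^2 := by
      refine badset_high G hj hα0 ht ?_
      intro x hx
      have := (Finset.mem_filter.mp hx).2
      linarith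
    have h3 : ((Bad T).card : ℝ) ≤
        ((Finset.univ.filter (fun x => ((G.neighborFinset x ∩ T).card : ℝ) < p * T.card / 2)).card : ℝ) +
        ((Finset.univ.filter (fun x => 3 * p * T.card / 2 < ((G.neighborFinset x ∩ T).card : ℝ))).card : ℝ) :=
      le_trans (by exact_mod_cast Finset.card_le_card hsub) (hcardU _ _)
    have hp' : p ≠ 0 := ne_of_gt hp
    have hT' : (T.card : ℝ) ≠ 0 := ne_of_gt hT
    have heq : α^2 * T.card / (p * T.card/2)^2 = 4*α^2/(p^2*T.card) := by
      field_simp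
      ring
    rw [heq] at h1 h2
    have he8 : (8:ℝ)*α^2/(p^2*T.card) = 4*α^2/(p^2*T.card) + 4*α^2/(p^2*T.card) := by ring
    linarith
  have hu : ((Finset.univ : Finset V).card : ℝ) = n := by
    rw [Finset.card_univ]
  have hk40 : (40000*C^2)*(p*n) ≤ (p^3*n)*(p*n) :=
    mul_le_mul_of_nonneg_right (by linarith) (le_of_lt hpn0)
  have hk40' : 40000*(α^2) ≤ (p^3*n)*(p*n) := by nlinarith [hα2, hk40]
  have hB0 : ((Bad Finset.univ).card : ℝ) ≤ p^2*n/5000 := by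
    have h := hBadCard Finset.univ (by rw [hu]; exact hn0)
    rw [hu] at h
    have key : 8*α^2/(p^2*n) ≤ p^2*n/5000 := by
      rw [div_le_div_iff₀ (by positivity) (by norm_num)]
      nlinarith [hk40']
    linarith
  have hB1 : ∀ T : Finset V, p*n/2 ≤ (T.card : ℝ) → ((Bad T).card : ℝ) ≤ p*n/2500 := by
    intro T hT
    have hTpos : 0 < (T.card : ℝ) := lt_of_lt_of_le (by positivity) hT
    have h := hBadCard T hTpos
    have key : 8*α^2/(p^2*T.card) ≤ p*n/2500 := by
      rw [div_le_div_iff₀ (by positivity) (by norm_num)]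
      have k2 : (p*n)*(p^2*(p*n/2)) ≤ (p*n)*(p^2*T.card) :=
        mul_le_mul_of_nonneg_left (mul_le_mul_of_nonneg_left hT (by positivity)) (le_of_lt hpn0)
      nlinarith [hk40', k2]
    linarith
  have hB2 : ∀ T : Finset V, p^2*n/4 ≤ (T.card : ℝ) → ((Bad T).card : ℝ) ≤ n/1250 := by
    intro T hT
    have hTpos : 0 < (T.card : ℝ) := lt_of_lt_of_le (by positivity) hT
    have h := hBadCard T hTpos
    have key : 8*α^2/(p^2*T.card) ≤ n/1250 := by
      rw [div_le_div_iff₀ (by positivity) (by norm_num)]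
      have k2 : n*(p^2*(p^2*n/4)) ≤ n*(p^2*T.card) :=
        mul_le_mul_of_nonneg_left (mul_le_mul_of_nonneg_left hT (by positivity)) (le_of_lt hn0)
      nlinarith [hk40', k2]
    linarith
  -- STEP x0
  obtain ⟨x0, -, hx0g⟩ := hpick Finset.univ (Bad Finset.univ)
    (by rw [hu]; nlinarith [hB0, hp2le, hn6])
  have h0 := hGood Finset.univ x0 hx0g
  rw [Finset.inter_univ, hu] at h0
  -- STEP x1
  obtain ⟨x1, hx1S, hx1n⟩ := hpick (G.neighborFinset x0) (Bad Finset.univ ∪ {x0}) (by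
    have hcu := hcardU (Bad Finset.univ) {x0}
    have hone : ((({x0} : Finset V)).card : ℝ) = 1 := by simp
    rw [hone] at hcu
    linarith [h0.1, hpnbig, hpn2le, hB0])
  have hx1B : x1 ∉ Bad Finset.univ := fun h => hx1n (Finset.mem_union_left _ h)
  have n10 : x1 ≠ x0 := fun h => hx1n (Finset.mem_union_right _ (by simp [h]))
  have a01 : G.Adj x0 x1 := by rwa [SimpleGraph.mem_neighborFinset] at hx1S
  have h1s := hGood Finset.univ x1 hx1B
  rw [Finset.inter_univ, hu] at h1s
  -- STEP x2
  obtain ⟨x2, hx2S, hx2n⟩ := hpick (G.neighborFinset x1) (Bad Finset.univ ∪ {x0, x1}) (by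
    have hcu := hcardU (Bad Finset.univ) {x0, x1}
    have htwo : ((({x0, x1} : Finset V)).card : ℝ) ≤ 2 := by
      have := Finset.card_insert_le x0 ({x1} : Finset V)
      have h1 : (({x1} : Finset V)).card = 1 := Finset.card_singleton x1
      exact_mod_cast by omega
    linarith [h1s.1, hpnbig, hpn2le, hB0])
  have hx2B : x2 ∉ Bad Finset.univ := fun h => hx2n (Finset.mem_union_left _ h)
  have hx2U : x2 ∉ ({x0, x1} : Finset V) := fun h => hx2n (Finset.mem_union_right _ h)
  simp only [Finset.mem_insert, Finset.mem_singleton, not_or] at hx2U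
  obtain ⟨n20, n21⟩ := hx2U
  have a12 : G.Adj x1 x2 := by rwa [SimpleGraph.mem_neighborFinset] at hx2S
  have h2s := hGood Finset.univ x2 hx2B
  rw [Finset.inter_univ, hu] at h2s
  -- STEP x3
  obtain ⟨x3, hx3S, hx3n⟩ := hpick (G.neighborFinset x2)
      (Bad Finset.univ ∪ Bad (G.neighborFinset x0) ∪ {x0, x1, x2}) (by
    have hcu1 := hcardU (Bad Finset.univ ∪ Bad (G.neighborFinset x0)) {x0, x1, x2}
    have hcu2 := hcardU (Bad Finset.univ) (Bad (G.neighborFinset x0))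
    have hthree : ((({x0, x1, x2} : Finset V)).card : ℝ) ≤ 3 := by
      have h1 := Finset.card_insert_le x0 ({x1, x2} : Finset V)
      have h2 := Finset.card_insert_le x1 ({x2} : Finset V)
      have h3 : (({x2} : Finset V)).card = 1 := Finset.card_singleton x2
      exact_mod_cast by omega
    have hb1 := hB1 (G.neighborFinset x0) h0.1
    linarith [h2s.1, hpnbig, hpn2le, hB0])
  have hx3B : x3 ∉ Bad Finset.univ :=
    fun h => hx3n (Finset.mem_union_left _ (Finset.mem_union_left _ h))
  have hx3B0 : x3 ∉ Bad (G.neighborFinset x0) :=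
    fun h => hx3n (Finset.mem_union_left _ (Finset.mem_union_right _ h))
  have hx3U : x3 ∉ ({x0, x1, x2} : Finset V) := fun h => hx3n (Finset.mem_union_right _ h)
  simp only [Finset.mem_insert, Finset.mem_singleton, not_or] at hx3U
  obtain ⟨n30, n31, n32⟩ := hx3U
  have a23 : G.Adj x2 x3 := by rwa [SimpleGraph.mem_neighborFinset] at hx3S
  have h3s := hGood Finset.univ x3 hx3B
  rw [Finset.inter_univ, hu] at h3s
  have h30 := hGood (G.neighborFinset x0) x3 hx3B0
  have hT4 : p^2*n/4 ≤ ((G.neighborFinset x3 ∩ G.neighborFinset x0).card : ℝ) := by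
    have k := mul_le_mul_of_nonneg_left h0.1 (le_of_lt hp)
    have e : p*(p*n/2) = p^2*n/2 := by ring
    linarith [h30.1, le_of_eq e, ge_of_eq e]
  -- PAIR STEP (x5, x8)
  set R5 : Finset V := Bad (G.neighborFinset x2) ∪ {x0, x1, x2, x3} with hR5def
  set R8 : Finset V := Bad (G.neighborFinset x1) ∪ {x0, x1, x2, x3} with hR8def
  have hfour : ((({x0, x1, x2, x3} : Finset V)).card : ℝ) ≤ 4 := by
    have h1 := Finset.card_insert_le x0 ({x1, x2, x3} : Finset V)
    have h2 := Finset.card_insert_le x1 ({x2, x3} : Finset V)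
    have h3 := Finset.card_insert_le x2 ({x3} : Finset V)
    have h4 : (({x3} : Finset V)).card = 1 := Finset.card_singleton x3
    exact_mod_cast by omega
  have hr5 : ((G.neighborFinset x0 ∩ R5).card : ℝ) ≤ p*n/1250 := by
    have h1 : ((G.neighborFinset x0 ∩ R5).card : ℝ) ≤ (R5.card : ℝ) := by
      exact_mod_cast Finset.card_le_card Finset.inter_subset_right
    have h2 := hcardU (Bad (G.neighborFinset x2)) {x0, x1, x2, x3}
    have h3 := hB1 (G.neighborFinset x2) h2s.1
    rw [hR5def] at h1
    linarith [hpnbig, hfour]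
  have hr8 : ((G.neighborFinset x3 ∩ R8).card : ℝ) ≤ p*n/1250 := by
    have h1 : ((G.neighborFinset x3 ∩ R8).card : ℝ) ≤ (R8.card : ℝ) := by
      exact_mod_cast Finset.card_le_card Finset.inter_subset_right
    have h2 := hcardU (Bad (G.neighborFinset x1)) {x0, x1, x2, x3}
    have h3 := hB1 (G.neighborFinset x1) h1s.1
    rw [hR8def] at h1
    linarith [hpnbig, hfour]
  have hsplit : ((G.interedges (G.neighborFinset x0) (G.neighborFinset x3)).card : ℝ) ≤
      ((G.interedges (G.neighborFinset x0 ∩ R5) (G.neighborFinset x3)).card : ℝ) +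
      ((G.interedges (G.neighborFinset x0) (G.neighborFinset x3 ∩ R8)).card : ℝ) +
      ((G.interedges (G.neighborFinset x0 \ R5) (G.neighborFinset x3 \ R8)).card : ℝ) := by
    have hs : G.interedges (G.neighborFinset x0) (G.neighborFinset x3) ⊆
        (G.interedges (G.neighborFinset x0 ∩ R5) (G.neighborFinset x3)) ∪
        ((G.interedges (G.neighborFinset x0) (G.neighborFinset x3 ∩ R8)) ∪
         (G.interedges (G.neighborFinset x0 \ R5) (G.neighborFinset x3 \ R8))) := by
      intro e he
      rw [SimpleGraph.mem_interedges_iff] at he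
      obtain ⟨h1, h2, h3⟩ := he
      by_cases hA : e.1 ∈ R5
      · exact Finset.mem_union_left _
          (by rw [SimpleGraph.mem_interedges_iff]; exact ⟨Finset.mem_inter.mpr ⟨h1, hA⟩, h2, h3⟩)
      · by_cases hB : e.2 ∈ R8
        · exact Finset.mem_union_right _ (Finset.mem_union_left _
            (by rw [SimpleGraph.mem_interedges_iff]; exact ⟨h1, Finset.mem_inter.mpr ⟨h2, hB⟩, h3⟩))
        · exact Finset.mem_union_right _ (Finset.mem_union_right _
            (by rw [SimpleGraph.mem_interedges_iff]
                exact ⟨Finset.mem_sdiff.mpr ⟨h1, hA⟩, Finset.mem_sdiff.mpr ⟨h2, hB⟩, h3⟩))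
    have hc := Finset.card_le_card hs
    have hc2 := Finset.card_union_le
      (G.interedges (G.neighborFinset x0 ∩ R5) (G.neighborFinset x3))
      ((G.interedges (G.neighborFinset x0) (G.neighborFinset x3 ∩ R8)) ∪
       (G.interedges (G.neighborFinset x0 \ R5) (G.neighborFinset x3 \ R8)))
    have hc3 := Finset.card_union_le
      (G.interedges (G.neighborFinset x0) (G.neighborFinset x3 ∩ R8))
      (G.interedges (G.neighborFinset x0 \ R5) (G.neighborFinset x3 \ R8))
    exact_mod_cast by omega
  have hsqN : Real.sqrt (((G.neighborFinset x0).card : ℝ) * ((G.neighborFinset x3).card : ℝ)) ≤ 3*p*n/2 := by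
    have h1 : ((G.neighborFinset x0).card : ℝ) * ((G.neighborFinset x3).card : ℝ) ≤ (3*p*n/2)^2 := by
      have u1 : ((G.neighborFinset x0).card : ℝ) * ((G.neighborFinset x3).card : ℝ) ≤ (3*p*n/2) * (3*p*n/2) :=
        mul_le_mul h0.2 h3s.2 (Nat.cast_nonneg _) (by positivity)
      have e : (3*p*n/2) * (3*p*n/2) = (3*p*n/2)^2 := by ring
      linarith [le_of_eq e, ge_of_eq e]
    calc Real.sqrt (((G.neighborFinset x0).card : ℝ) * ((G.neighborFinset x3).card : ℝ))
        ≤ Real.sqrt ((3*p*n/2)^2) := Real.sqrt_le_sqrt h1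
      _ = 3*p*n/2 := Real.sqrt_sq (by positivity)
  have hmainlb : p^3*n^2/4 - α*(3*p*n/2) ≤
      ((G.interedges (G.neighborFinset x0) (G.neighborFinset x3)).card : ℝ) := by
    have hl := jumb_lower G hj (G.neighborFinset x0) (G.neighborFinset x3)
    have hA1 : p^3*n^2/4 ≤ p * ((G.neighborFinset x0).card : ℝ) * ((G.neighborFinset x3).card : ℝ) := by
      have u1 : p*(p*n/2) ≤ p * ((G.neighborFinset x0).card : ℝ) :=
        mul_le_mul_of_nonneg_left h0.1 hp.le
      have u2 : (p*(p*n/2))*(p*n/2) ≤ (p * ((G.neighborFinset x0).card : ℝ)) * ((G.neighborFinset x3).card : ℝ) :=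
        mul_le_mul u1 h3s.1 (by positivity) (mul_nonneg hp.le (Nat.cast_nonneg _))
      have e : (p*(p*n/2))*(p*n/2) = p^3*n^2/4 := by ring
      linarith [le_of_eq e, ge_of_eq e]
    have hA2 : α * Real.sqrt (((G.neighborFinset x0).card : ℝ) * ((G.neighborFinset x3).card : ℝ))
        ≤ α*(3*p*n/2) := mul_le_mul_of_nonneg_left hsqN hα0
    linarith

  have hterm1 : ((G.interedges (G.neighborFinset x0 ∩ R5) (G.neighborFinset x3)).card : ℝ) ≤ 3*p^3*n^2/2500 + α*(p*n/25) := by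
    have hub := jumb_upper G hj (G.neighborFinset x0 ∩ R5) (G.neighborFinset x3)
    have hprod : (((G.neighborFinset x0 ∩ R5)).card : ℝ) * (((G.neighborFinset x3)).card : ℝ) ≤ (p*n/1250) * (3*p*n/2) :=
      mul_le_mul hr5 h3s.2 (Nat.cast_nonneg _) (by positivity)
    have hA1 : p * (((G.neighborFinset x0 ∩ R5)).card : ℝ) * (((G.neighborFinset x3)).card : ℝ) ≤ 3*p^3*n^2/2500 := by
      have u1 : p * ((((G.neighborFinset x0 ∩ R5)).card : ℝ) * (((G.neighborFinset x3)).card : ℝ)) ≤ p * ((p*n/1250) * (3*p*n/2)) :=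
        mul_le_mul_of_nonneg_left hprod hp.le
      have e1 : p * ((p*n/1250) * (3*p*n/2)) = 3*p^3*n^2/2500 := by ring
      have e2 : p * ((((G.neighborFinset x0 ∩ R5)).card : ℝ) * (((G.neighborFinset x3)).card : ℝ)) = p * (((G.neighborFinset x0 ∩ R5)).card : ℝ) * (((G.neighborFinset x3)).card : ℝ) := by ring
      linarith [le_of_eq e1, ge_of_eq e1, le_of_eq e2, ge_of_eq e2]
    have hA2 : Real.sqrt ((((G.neighborFinset x0 ∩ R5)).card : ℝ) * (((G.neighborFinset x3)).card : ℝ)) ≤ p*n/25 := by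
      have h1 : (((G.neighborFinset x0 ∩ R5)).card : ℝ) * (((G.neighborFinset x3)).card : ℝ) ≤ (p*n/25)^2 := by
        linarith [hsm1, hprod]
      calc Real.sqrt ((((G.neighborFinset x0 ∩ R5)).card : ℝ) * (((G.neighborFinset x3)).card : ℝ)) ≤ Real.sqrt ((p*n/25)^2) :=
            Real.sqrt_le_sqrt h1
        _ = p*n/25 := Real.sqrt_sq (by positivity)
    have hA3 := mul_le_mul_of_nonneg_left hA2 hα0
    linarith
  have hterm2 : ((G.interedges (G.neighborFinset x0) (G.neighborFinset x3 ∩ R8)).card : ℝ) ≤ 3*p^3*n^2/2500 + α*(p*n/25) := by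
    have hub := jumb_upper G hj (G.neighborFinset x0) (G.neighborFinset x3 ∩ R8)
    have hprod : (((G.neighborFinset x0)).card : ℝ) * (((G.neighborFinset x3 ∩ R8)).card : ℝ) ≤ (3*p*n/2) * (p*n/1250) :=
      mul_le_mul h0.2 hr8 (Nat.cast_nonneg _) (by positivity)
    have hA1 : p * (((G.neighborFinset x0)).card : ℝ) * (((G.neighborFinset x3 ∩ R8)).card : ℝ) ≤ 3*p^3*n^2/2500 := by
      have u1 : p * ((((G.neighborFinset x0)).card : ℝ) * (((G.neighborFinset x3 ∩ R8)).card : ℝ)) ≤ p * ((3*p*n/2) * (p*n/1250)) :=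
        mul_le_mul_of_nonneg_left hprod hp.le
      have e1 : p * ((3*p*n/2) * (p*n/1250)) = 3*p^3*n^2/2500 := by ring
      have e2 : p * ((((G.neighborFinset x0)).card : ℝ) * (((G.neighborFinset x3 ∩ R8)).card : ℝ)) = p * (((G.neighborFinset x0)).card : ℝ) * (((G.neighborFinset x3 ∩ R8)).card : ℝ) := by ring
      linarith [le_of_eq e1, ge_of_eq e1, le_of_eq e2, ge_of_eq e2]
    have hA2 : Real.sqrt ((((G.neighborFinset x0)).card : ℝ) * (((G.neighborFinset x3 ∩ R8)).card : ℝ)) ≤ p*n/25 := by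
      have h1 : (((G.neighborFinset x0)).card : ℝ) * (((G.neighborFinset x3 ∩ R8)).card : ℝ) ≤ (p*n/25)^2 := by
        linarith [hsm2, hprod]
      calc Real.sqrt ((((G.neighborFinset x0)).card : ℝ) * (((G.neighborFinset x3 ∩ R8)).card : ℝ)) ≤ Real.sqrt ((p*n/25)^2) :=
            Real.sqrt_le_sqrt h1
        _ = p*n/25 := Real.sqrt_sq (by positivity)
    have hA3 := mul_le_mul_of_nonneg_left hA2 hα0
    linarith
  have hEpos : (0:ℝ) <
      ((G.interedges (G.neighborFinset x0 \ R5) (G.neighborFinset x3 \ R8)).card : ℝ) := by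
    have k := mul_le_mul_of_nonneg_right hα200 (le_of_lt hpn0)
    have hP3 : (0:ℝ) < p^3*n^2 := by positivity
    have e : (p^2*n/200)*(p*n) = p^3*n^2/200 := by ring
    linarith [hsplit, hmainlb, hterm1, hterm2, k, hP3, le_of_eq e, ge_of_eq e]
  obtain ⟨ee, hee⟩ := Finset.card_pos.mp (by exact_mod_cast hEpos)
  obtain ⟨x5, x8⟩ := ee
  rw [SimpleGraph.mk_mem_interedges_iff] at hee
  obtain ⟨he5, he8, a58⟩ := hee
  rw [Finset.mem_sdiff] at he5 he8
  have a05 : G.Adj x0 x5 := by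
    have := he5.1
    rwa [SimpleGraph.mem_neighborFinset] at this
  have a38 : G.Adj x3 x8 := by
    have := he8.1
    rwa [SimpleGraph.mem_neighborFinset] at this
  have n58 : x5 ≠ x8 := a58.ne
  have hx5B : x5 ∉ Bad (G.neighborFinset x2) := fun h => he5.2 (by rw [hR5def]; exact Finset.mem_union_left _ h)
  have hx5U : x5 ∉ ({x0, x1, x2, x3} : Finset V) := fun h => he5.2 (by rw [hR5def]; exact Finset.mem_union_right _ h)
  simp only [Finset.mem_insert, Finset.mem_singleton, not_or] at hx5U
  obtain ⟨n50, n51, n52, n53⟩ := hx5U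
  have hx8B : x8 ∉ Bad (G.neighborFinset x1) := fun h => he8.2 (by rw [hR8def]; exact Finset.mem_union_left _ h)
  have hx8U : x8 ∉ ({x0, x1, x2, x3} : Finset V) := fun h => he8.2 (by rw [hR8def]; exact Finset.mem_union_right _ h)
  simp only [Finset.mem_insert, Finset.mem_singleton, not_or] at hx8U
  obtain ⟨n80, n81, n82, n83⟩ := hx8U
  have h75 := hGood (G.neighborFinset x2) x5 hx5B
  have hT7 : p^2*n/4 ≤ ((G.neighborFinset x5 ∩ G.neighborFinset x2).card : ℝ) := by
    have k := mul_le_mul_of_nonneg_left h2s.1 (le_of_lt hp)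
    have e : p*(p*n/2) = p^2*n/2 := by ring
    linarith [h75.1, le_of_eq e, ge_of_eq e]
  have h68 := hGood (G.neighborFinset x1) x8 hx8B
  have hT6 : p^2*n/4 ≤ ((G.neighborFinset x8 ∩ G.neighborFinset x1).card : ℝ) := by
    have k := mul_le_mul_of_nonneg_left h1s.1 (le_of_lt hp)
    have e : p*(p*n/2) = p^2*n/2 := by ring
    linarith [h68.1, le_of_eq e, ge_of_eq e]
  -- STEP x9
  obtain ⟨x9, -, hx9n⟩ := hpick Finset.univ
      (Bad (G.neighborFinset x3 ∩ G.neighborFinset x0) ∪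
       Bad (G.neighborFinset x5 ∩ G.neighborFinset x2) ∪
       Bad (G.neighborFinset x8 ∩ G.neighborFinset x1) ∪ {x0, x1, x2, x3, x5, x8}) (by
    rw [hu]
    have b1 := hB2 _ hT4
    have b2 := hB2 _ hT7
    have b3 := hB2 _ hT6
    have c1 := hcardU (Bad (G.neighborFinset x3 ∩ G.neighborFinset x0) ∪
       Bad (G.neighborFinset x5 ∩ G.neighborFinset x2) ∪
       Bad (G.neighborFinset x8 ∩ G.neighborFinset x1)) {x0, x1, x2, x3, x5, x8}
    have c2 := hcardU (Bad (G.neighborFinset x3 ∩ G.neighborFinset x0) ∪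
       Bad (G.neighborFinset x5 ∩ G.neighborFinset x2))
       (Bad (G.neighborFinset x8 ∩ G.neighborFinset x1))
    have c3 := hcardU (Bad (G.neighborFinset x3 ∩ G.neighborFinset x0))
       (Bad (G.neighborFinset x5 ∩ G.neighborFinset x2))
    have hsix : ((({x0, x1, x2, x3, x5, x8} : Finset V)).card : ℝ) ≤ 6 := by
      have h1 := Finset.card_insert_le x0 ({x1, x2, x3, x5, x8} : Finset V)
      have h2 := Finset.card_insert_le x1 ({x2, x3, x5, x8} : Finset V)
      have h3 := Finset.card_insert_le x2 ({x3, x5, x8} : Finset V)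
      have h4 := Finset.card_insert_le x3 ({x5, x8} : Finset V)
      have h5 := Finset.card_insert_le x5 ({x8} : Finset V)
      have h6 : (({x8} : Finset V)).card = 1 := Finset.card_singleton x8
      exact_mod_cast by omega
    linarith [hn6])
  have hx9B4 : x9 ∉ Bad (G.neighborFinset x3 ∩ G.neighborFinset x0) :=
    fun h => hx9n (Finset.mem_union_left _ (Finset.mem_union_left _ (Finset.mem_union_left _ h)))
  have hx9B7 : x9 ∉ Bad (G.neighborFinset x5 ∩ G.neighborFinset x2) :=
    fun h => hx9n (Finset.mem_union_left _ (Finset.mem_union_left _ (Finset.mem_union_right _ h)))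
  have hx9B6 : x9 ∉ Bad (G.neighborFinset x8 ∩ G.neighborFinset x1) :=
    fun h => hx9n (Finset.mem_union_left _ (Finset.mem_union_right _ h))
  have hx9U : x9 ∉ ({x0, x1, x2, x3, x5, x8} : Finset V) := fun h => hx9n (Finset.mem_union_right _ h)
  simp only [Finset.mem_insert, Finset.mem_singleton, not_or] at hx9U
  obtain ⟨n90, n91, n92, n93, n95, n98⟩ := hx9U

  have hF4 : (25:ℝ)/2 ≤ ((G.neighborFinset x9 ∩ (G.neighborFinset x3 ∩ G.neighborFinset x0)).card : ℝ) := by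
    have hg := hGood (G.neighborFinset x3 ∩ G.neighborFinset x0) x9 hx9B4
    have k := mul_le_mul_of_nonneg_left hT4 (le_of_lt hp)
    have e : p*(p^2*n/4) = p^3*n/4 := by ring
    linarith [hg.1, hp3n, le_of_eq e, ge_of_eq e]
  have hF7 : (25:ℝ)/2 ≤ ((G.neighborFinset x9 ∩ (G.neighborFinset x5 ∩ G.neighborFinset x2)).card : ℝ) := by
    have hg := hGood (G.neighborFinset x5 ∩ G.neighborFinset x2) x9 hx9B7
    have k := mul_le_mul_of_nonneg_left hT7 (le_of_lt hp)
    have e : p*(p^2*n/4) = p^3*n/4 := by ring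
    linarith [hg.1, hp3n, le_of_eq e, ge_of_eq e]
  have hF6 : (25:ℝ)/2 ≤ ((G.neighborFinset x9 ∩ (G.neighborFinset x8 ∩ G.neighborFinset x1)).card : ℝ) := by
    have hg := hGood (G.neighborFinset x8 ∩ G.neighborFinset x1) x9 hx9B6
    have k := mul_le_mul_of_nonneg_left hT6 (le_of_lt hp)
    have e : p*(p^2*n/4) = p^3*n/4 := by ring
    linarith [hg.1, hp3n, le_of_eq e, ge_of_eq e]
  -- STEP x4
  obtain ⟨x4, hx4S, hx4n⟩ := hpick (G.neighborFinset x9 ∩ (G.neighborFinset x3 ∩ G.neighborFinset x0))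
      {x0, x1, x2, x3, x5, x8, x9} (by
    have hseven : ((({x0, x1, x2, x3, x5, x8, x9} : Finset V)).card : ℝ) ≤ 7 := by
      have h1 := Finset.card_insert_le x0 ({x1, x2, x3, x5, x8, x9} : Finset V)
      have h2 := Finset.card_insert_le x1 ({x2, x3, x5, x8, x9} : Finset V)
      have h3 := Finset.card_insert_le x2 ({x3, x5, x8, x9} : Finset V)
      have h4 := Finset.card_insert_le x3 ({x5, x8, x9} : Finset V)
      have h5 := Finset.card_insert_le x5 ({x8, x9} : Finset V)
      have h6 := Finset.card_insert_le x8 ({x9} : Finset V)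
      have h7 : (({x9} : Finset V)).card = 1 := Finset.card_singleton x9
      exact_mod_cast by omega
    linarith [hF4])
  rw [Finset.mem_inter] at hx4S
  have a94 : G.Adj x9 x4 := by
    have := hx4S.1
    rwa [SimpleGraph.mem_neighborFinset] at this
  have hx4S2 := hx4S.2
  rw [Finset.mem_inter] at hx4S2
  have a34 : G.Adj x3 x4 := by
    have := hx4S2.1
    rwa [SimpleGraph.mem_neighborFinset] at this
  have a04 : G.Adj x0 x4 := by
    have := hx4S2.2
    rwa [SimpleGraph.mem_neighborFinset] at this
  simp only [Finset.mem_insert, Finset.mem_singleton, not_or] at hx4n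
  obtain ⟨n40, n41, n42, n43, n45, n48, n49⟩ := hx4n
  -- STEP x6
  obtain ⟨x6, hx6S, hx6n⟩ := hpick (G.neighborFinset x9 ∩ (G.neighborFinset x8 ∩ G.neighborFinset x1))
      {x0, x1, x2, x3, x4, x5, x8, x9} (by
    have height : ((({x0, x1, x2, x3, x4, x5, x8, x9} : Finset V)).card : ℝ) ≤ 8 := by
      have h1 := Finset.card_insert_le x0 ({x1, x2, x3, x4, x5, x8, x9} : Finset V)
      have h2 := Finset.card_insert_le x1 ({x2, x3, x4, x5, x8, x9} : Finset V)
      have h3 := Finset.card_insert_le x2 ({x3, x4, x5, x8, x9} : Finset V)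
      have h4 := Finset.card_insert_le x3 ({x4, x5, x8, x9} : Finset V)
      have h5 := Finset.card_insert_le x4 ({x5, x8, x9} : Finset V)
      have h6 := Finset.card_insert_le x5 ({x8, x9} : Finset V)
      have h7 := Finset.card_insert_le x8 ({x9} : Finset V)
      have h8 : (({x9} : Finset V)).card = 1 := Finset.card_singleton x9
      exact_mod_cast by omega
    linarith [hF6])
  rw [Finset.mem_inter] at hx6S
  have a96 : G.Adj x9 x6 := by
    have := hx6S.1
    rwa [SimpleGraph.mem_neighborFinset] at this
  have hx6S2 := hx6S.2
  rw [Finset.mem_inter] at hx6S2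
  have a86 : G.Adj x8 x6 := by
    have := hx6S2.1
    rwa [SimpleGraph.mem_neighborFinset] at this
  have a16 : G.Adj x1 x6 := by
    have := hx6S2.2
    rwa [SimpleGraph.mem_neighborFinset] at this
  simp only [Finset.mem_insert, Finset.mem_singleton, not_or] at hx6n
  obtain ⟨n60, n61, n62, n63, n64, n65, n68, n69⟩ := hx6n
  -- STEP x7
  obtain ⟨x7, hx7S, hx7n⟩ := hpick (G.neighborFinset x9 ∩ (G.neighborFinset x5 ∩ G.neighborFinset x2))
      {x0, x1, x2, x3, x4, x5, x6, x8, x9} (by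
    have hnine : ((({x0, x1, x2, x3, x4, x5, x6, x8, x9} : Finset V)).card : ℝ) ≤ 9 := by
      have h1 := Finset.card_insert_le x0 ({x1, x2, x3, x4, x5, x6, x8, x9} : Finset V)
      have h2 := Finset.card_insert_le x1 ({x2, x3, x4, x5, x6, x8, x9} : Finset V)
      have h3 := Finset.card_insert_le x2 ({x3, x4, x5, x6, x8, x9} : Finset V)
      have h4 := Finset.card_insert_le x3 ({x4, x5, x6, x8, x9} : Finset V)
      have h5 := Finset.card_insert_le x4 ({x5, x6, x8, x9} : Finset V)
      have h6 := Finset.card_insert_le x5 ({x6, x8, x9} : Finset V)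
      have h7 := Finset.card_insert_le x6 ({x8, x9} : Finset V)
      have h8 := Finset.card_insert_le x8 ({x9} : Finset V)
      have h9 : (({x9} : Finset V)).card = 1 := Finset.card_singleton x9
      exact_mod_cast by omega
    linarith [hF7])
  rw [Finset.mem_inter] at hx7S
  have a97 : G.Adj x9 x7 := by
    have := hx7S.1
    rwa [SimpleGraph.mem_neighborFinset] at this
  have hx7S2 := hx7S.2
  rw [Finset.mem_inter] at hx7S2
  have a57 : G.Adj x5 x7 := by
    have := hx7S2.1
    rwa [SimpleGraph.mem_neighborFinset] at this
  have a27 : G.Adj x2 x7 := by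
    have := hx7S2.2
    rwa [SimpleGraph.mem_neighborFinset] at this
  simp only [Finset.mem_insert, Finset.mem_singleton, not_or] at hx7n
  obtain ⟨n70, n71, n72, n73, n74, n75, n76, n78, n79⟩ := hx7n
  -- ASSEMBLY
  unfold ContainsCopy
  refine ⟨fun s => lookFun x0 x1 x2 x3 x4 x5 x6 x7 x8 x9 (eIdx s.1), ?_, ?_⟩
  · intro a b hab
    exact hinjE a b (lookInj (Ne.symm n10) (Ne.symm n20) (Ne.symm n30) (Ne.symm n40) (Ne.symm n50) (Ne.symm n60) (Ne.symm n70) (Ne.symm n80) (Ne.symm n90) (Ne.symm n21) (Ne.symm n31) (Ne.symm n41) (Ne.symm n51) (Ne.symm n61) (Ne.symm n71) (Ne.symm n81) (Ne.symm n91) (Ne.symm n32) (Ne.symm n42) (Ne.symm n52) (Ne.symm n62) (Ne.symm n72) (Ne.symm n82) (Ne.symm n92) (Ne.symm n43) (Ne.symm n53) (Ne.symm n63) (Ne.symm n73) (Ne.symm n83) (Ne.symm n93) n45 (Ne.symm n64) (Ne.symm n74) n48 n49 (Ne.symm n65) (Ne.symm n75) n58 (Ne.symm n95) (Ne.symm n76)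 n68 n69 n78 n79 (Ne.symm n98)
      (eIdx a.1) (eIdx b.1) hab)
  · intro a b hab
    exact lookAdj G a01 a12 a23 a05 a38 a58 a57 a27 a97 a96 a86 a16 a94 a34 a04
      (eIdx a.1) (eIdx b.1) (hadjE a b hab)
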